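/- Let V be a 4-dimensional real vector space and let ω₊ and ω₋ be nonzero alternating bilinear forms on V satisfying ω₊ ∧ ω₊ = 0, ω₋ ∧ ω₋ = 0, and ω₊ ∧ ω₋ ≠ 0. Let rad(ω) = {v ∈ V : ω(v,w) = 0 for all w ∈ V} denote the radical of an alternating form ω. Then rad(ω₊) and rad(ω₋) are 2-dimensional subspaces of V and V = rad(ω₊) ⊕ rad(ω₋). -/

import Mathlib

/-- The wedge product of two alternating bilinear forms on a real vector space,
evaluated on four vectors via the (2,2)-shuffle formula. -/
def wedge22 {V : Type*} (ω η : V → V → ℝ) (x y z w : V) : ℝ :=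
  ω x y * η z w - ω x z * η y w + ω x w * η y z
    + ω y z * η x w - ω y w * η x z + ω z w * η x y

/-- The radical of a bilinear form `ω` on `V`:
`rad(ω) = {v ∈ V : ω(v,w) = 0 for all w}`, i.e. the kernel of `v ↦ ω(v,·)`. -/
noncomputable def radical {V : Type*} [AddCommGroup V] [Module ℝ V]
    (ω : V →ₗ[ℝ] V →ₗ[ℝ] ℝ) : Submodule ℝ V :=
  LinearMap.ker ω

section Aux

variable {V : Type*} [AddCommGroup V] [Module ℝ V]

lemma skew_of_alt (ω : V →ₗ[ℝ] V →ₗ[ℝ] ℝ) (h : ∀ v : V, ω v v = 0) (x y : V) :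
    ω x y = - ω y x := by
  have h2 := h (x + y)
  simp only [map_add, LinearMap.add_apply, h x, h y] at h2
  linarith

/-- A nonzero alternating bilinear form satisfying the Plücker relation has
a radical of codimension 2. -/
lemma rad_dim_two [FiniteDimensional ℝ V] (hdim : Module.finrank ℝ V = 4)
    (ω : V →ₗ[ℝ] V →ₗ[ℝ] ℝ) (halt : ∀ v : V, ω v v = 0) (h0 : ω ≠ 0)
    (hpl : ∀ x y z w : V, wedge22 (fun a b => ω a b) (fun a b => ω a b) x y z w = 0) :
    Module.finrank ℝ (radical ω) = 2 := by
  -- find x, y with ω x y ≠ 0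
  obtain ⟨x, hx⟩ : ∃ x, ω x ≠ 0 := by
    by_contra h
    push_neg at h
    exact h0 (LinearMap.ext fun x => h x)
  obtain ⟨y, hxy⟩ : ∃ y, ω x y ≠ 0 := by
    by_contra h
    push_neg at h
    exact hx (LinearMap.ext fun y => h y)
  -- key Plücker identity
  have key : ∀ z w : V, ω x y * ω z w = ω x z * ω y w - ω x w * ω y z := by
    intro z w
    have := hpl x y z w
    simp only [wedge22] at this
    linarith
  set f : V →ₗ[ℝ] ℝ × ℝ := (ω x).prod (ω y) with hf
  have hker : radical ω = LinearMap.ker f := by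
    ext z
    simp only [radical, LinearMap.mem_ker, hf, LinearMap.ker_prod, Submodule.mem_inf,
      LinearMap.mem_ker]
    constructor
    · intro hz
      constructor
      · rw [skew_of_alt ω halt x z, hz]; simp
      · rw [skew_of_alt ω halt y z, hz]; simp
    · rintro ⟨h1, h2⟩
      apply LinearMap.ext
      intro w
      have := key z w
      rw [h1, h2] at this
      have : ω x y * ω z w = 0 := by linarith
      simpa using (mul_eq_zero.mp this).resolve_left hxy
  have hrange : LinearMap.range f = ⊤ := by
    rw [eq_top_iff]
    rintro ⟨a, b⟩ -
    refine ⟨(a / ω x y) • y - (b / ω x y) • x, ?_⟩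
    have hyx : ω y x = - ω x y := by rw [skew_of_alt ω halt y x]
    simp only [hf, LinearMap.prod_apply, Pi.prod, Function.prod, map_sub, map_smul, LinearMap.sub_apply,
      LinearMap.smul_apply, smul_eq_mul, halt x, halt y, hyx, Prod.smul_mk, Prod.mk_sub_mk,
      Prod.mk.injEq]
    constructor <;> field_simp <;> ring
  have h1 := LinearMap.finrank_range_add_finrank_ker f
  rw [hrange, hdim] at h1
  have h2 : Module.finrank ℝ (⊤ : Submodule ℝ (ℝ × ℝ)) = 2 := by
    simp [finrank_top]
  rw [hker]
  omega

end Aux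

/-- If `ω₊, ω₋` are nonzero alternating bilinear forms on a 4-dimensional real
vector space with `ω₊ ∧ ω₊ = 0`, `ω₋ ∧ ω₋ = 0` and `ω₊ ∧ ω₋ ≠ 0`, then the radicals
`rad(ω₊)` and `rad(ω₋)` are 2-dimensional and `V = rad(ω₊) ⊕ rad(ω₋)`. -/
theorem stmt1 (V : Type*) [AddCommGroup V] [Module ℝ V] [FiniteDimensional ℝ V]
    (hdim : Module.finrank ℝ V = 4)
    (ωp ωm : V →ₗ[ℝ] V →ₗ[ℝ] ℝ)
    (haltp : ∀ v : V, ωp v v = 0) (haltm : ∀ v : V, ωm v v = 0)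
    (hp0 : ωp ≠ 0) (hm0 : ωm ≠ 0)
    (hpp : ∀ x y z w : V, wedge22 (fun a b => ωp a b) (fun a b => ωp a b) x y z w = 0)
    (hmm : ∀ x y z w : V, wedge22 (fun a b => ωm a b) (fun a b => ωm a b) x y z w = 0)
    (hpm : ∃ x y z w : V, wedge22 (fun a b => ωp a b) (fun a b => ωm a b) x y z w ≠ 0) :
    Module.finrank ℝ (radical ωp) = 2 ∧ Module.finrank ℝ (radical ωm) = 2 ∧
      IsCompl (radical ωp) (radical ωm) := by
  have hrp := rad_dim_two hdim ωp haltp hp0 hpp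
  have hrm := rad_dim_two hdim ωm haltm hm0 hmm
  refine ⟨hrp, hrm, ?_⟩
  set F : V → V → V → V → ℝ :=
    wedge22 (fun a b => ωp a b) (fun a b => ωm a b) with hF
  have skp := skew_of_alt ωp haltp
  have skm := skew_of_alt ωm haltm
  -- equal-pair vanishing
  have e12 : ∀ a b c : V, F a a b c = 0 := by
    intro a b c; simp only [hF, wedge22, haltp, haltm]; ring
  have e13 : ∀ a b c : V, F a b a c = 0 := by
    intro a b c
    simp only [hF, wedge22, haltp, haltm, skp b a, skm b a]; ring
  have e14 : ∀ a b c : V, F a b c a = 0 := by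
    intro a b c
    simp only [hF, wedge22, haltp, haltm, skp b a, skm b a, skp c a, skm c a]; ring
  have e23 : ∀ a b c : V, F a b b c = 0 := by
    intro a b c; simp only [hF, wedge22, haltp, haltm]; ring
  have e24 : ∀ a b c : V, F a b c b = 0 := by
    intro a b c
    simp only [hF, wedge22, haltp, haltm, skp c b, skm c b]; ring
  have e34 : ∀ a b c : V, F a b c c = 0 := by
    intro a b c; simp only [hF, wedge22, haltp, haltm]; ring
  -- disjointness
  have hdisj : Disjoint (radical ωp) (radical ωm) := by
    rw [Submodule.disjoint_def]
    intro v hvp hvm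
    have hpv : ∀ t : V, ωp v t = 0 := by
      intro t
      have : ωp v = 0 := hvp
      rw [this]; rfl
    have hmv : ∀ t : V, ωm v t = 0 := by
      intro t
      have : ωm v = 0 := hvm
      rw [this]; rfl
    obtain ⟨x, y, z, w, hW⟩ := hpm
    -- F vanishes with v in any slot
    have fv1 : ∀ a b c : V, F v a b c = 0 := by
      intro a b c; simp [hF, wedge22, hpv, hmv]
    have fv2 : ∀ a b c : V, F a v b c = 0 := by
      intro a b c
      simp [hF, wedge22, hpv, hmv, skp a v, skm a v]
    have fv3 : ∀ a b c : V, F a b v c = 0 := by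
      intro a b c
      simp [hF, wedge22, hpv, hmv, skp a v, skm a v, skp b v, skm b v]
    have fv4 : ∀ a b c : V, F a b c v = 0 := by
      intro a b c
      simp [hF, wedge22, hpv, hmv, skp a v, skm a v, skp b v, skm b v, skp c v, skm c v]
    -- five vectors in a 4-dim space are dependent
    have hnli : ¬ LinearIndependent ℝ ![v, x, y, z, w] := by
      intro h
      have := h.fintype_card_le_finrank
      simp [hdim] at this
    rw [Fintype.not_linearIndependent_iff] at hnli
    obtain ⟨g, hg, i, hgi⟩ := hnli
    rw [Fin.sum_univ_five] at hg
    simp only [Matrix.cons_val_zero, Matrix.cons_val_one, Matrix.head_cons,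
      Matrix.cons_val_two, Matrix.tail_cons, Matrix.cons_val_three,
      Matrix.cons_val_four] at hg
    -- multilinearity expansion helpers
    have lin1 : ∀ (u u' : V) (b c d : V), F (u + u') b c d = F u b c d + F u' b c d := by
      intro u u' b c d; simp only [hF, wedge22, map_add, LinearMap.add_apply]; ring
    have lins1 : ∀ (r : ℝ) (u b c d : V), F (r • u) b c d = r * F u b c d := by
      intro r u b c d
      simp only [hF, wedge22, map_smul, LinearMap.smul_apply, smul_eq_mul]; ring
    have lin2 : ∀ (a : V) (u u' : V) (c d : V), F a (u + u') c d = F a u c d + F a u' c d := by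
      intro a u u' c d; simp only [hF, wedge22, map_add, LinearMap.add_apply]; ring
    have lins2 : ∀ (a : V) (r : ℝ) (u c d : V), F a (r • u) c d = r * F a u c d := by
      intro a r u c d
      simp only [hF, wedge22, map_smul, LinearMap.smul_apply, smul_eq_mul]; ring
    have lin3 : ∀ (a b : V) (u u' : V) (d : V), F a b (u + u') d = F a b u d + F a b u' d := by
      intro a b u u' d; simp only [hF, wedge22, map_add, LinearMap.add_apply]; ring
    have lins3 : ∀ (a b : V) (r : ℝ) (u d : V), F a b (r • u) d = r * F a b u d := by
      intro a b r u d
      simp only [hF, wedge22, map_smul, LinearMap.smul_apply, smul_eq_mul]; ring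
    have lin4 : ∀ (a b c : V) (u u' : V), F a b c (u + u') = F a b c u + F a b c u' := by
      intro a b c u u'; simp only [hF, wedge22, map_add, LinearMap.add_apply]; ring
    have lins4 : ∀ (a b c : V) (r : ℝ) (u : V), F a b c (r • u) = r * F a b c u := by
      intro a b c r u
      simp only [hF, wedge22, map_smul, LinearMap.smul_apply, smul_eq_mul]; ring
    set u := g 0 • v + g 1 • x + g 2 • y + g 3 • z + g 4 • w with hu
    have hu0 : u = 0 := hg
    have F0 : ∀ a b c : V, F 0 a b c = 0 := by
      intro a b c
      have := lins1 0 a a b c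
      simpa using this
    have F02 : ∀ a b c : V, F a 0 b c = 0 := by
      intro a b c; have := lins2 a 0 a b c; simpa using this
    have F03 : ∀ a b c : V, F a b 0 c = 0 := by
      intro a b c; have := lins3 a b 0 a c; simpa using this
    have F04 : ∀ a b c : V, F a b c 0 = 0 := by
      intro a b c; have := lins4 a b c 0 a; simpa using this
    have hg1 : g 1 = 0 := by
      have h1 : F u y z w = 0 := by rw [hu0]; exact F0 y z w
      rw [hu] at h1
      rw [lin1, lin1, lin1, lin1, lins1, lins1, lins1, lins1, lins1] at h1
      rw [fv1, e12, e13, e14] at h1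
      have : g 1 * F x y z w = 0 := by linarith
      exact (mul_eq_zero.mp this).resolve_right hW
    have hg2 : g 2 = 0 := by
      have h1 : F x u z w = 0 := by rw [hu0]; exact F02 x z w
      rw [hu] at h1
      rw [lin2, lin2, lin2, lin2, lins2, lins2, lins2, lins2, lins2] at h1
      rw [fv2, e12, e23, e24] at h1
      have : g 2 * F x y z w = 0 := by linarith
      exact (mul_eq_zero.mp this).resolve_right hW
    have hg3 : g 3 = 0 := by
      have h1 : F x y u w = 0 := by rw [hu0]; exact F03 x y w
      rw [hu] at h1
      rw [lin3, lin3, lin3, lin3, lins3, lins3, lins3, lins3, lins3] at h1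
      rw [fv3, e13, e23, e34] at h1
      have : g 3 * F x y z w = 0 := by linarith
      exact (mul_eq_zero.mp this).resolve_right hW
    have hg4 : g 4 = 0 := by
      have h1 : F x y z u = 0 := by rw [hu0]; exact F04 x y z
      rw [hu] at h1
      rw [lin4, lin4, lin4, lin4, lins4, lins4, lins4, lins4, lins4] at h1
      rw [fv4, e14, e24, e34] at h1
      have : g 4 * F x y z w = 0 := by linarith
      exact (mul_eq_zero.mp this).resolve_right hW
    have hg0 : g 0 ≠ 0 := by
      intro h
      apply hgi
      fin_cases i
      · exact h
      · exact hg1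
      · exact hg2
      · exact hg3
      · exact hg4
    have : g 0 • v = 0 := by
      rw [hu, hg1, hg2, hg3, hg4] at hu0
      simpa using hu0
    exact (smul_eq_zero.mp this).resolve_left hg0
  -- codisjointness via dimensions
  have hsup : radical ωp ⊔ radical ωm = ⊤ := by
    have h1 := Submodule.finrank_sup_add_finrank_inf_eq (radical ωp) (radical ωm)
    rw [disjoint_iff.mp hdisj] at h1
    simp only [finrank_bot, add_zero, hrp, hrm] at h1
    apply Submodule.eq_top_of_finrank_eq
    rw [h1, hdim]
  exact ⟨hdisj, codisjoint_iff.mpr hsup⟩
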